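/- Let τ > 0, 0 < a ≤ b ≤ 1, ρ_t = ρ_0(t+1)^a, α_t = α_0(t+1)^b with ρ_0 > τ, α_0 ≥ ρ_0 + τ, and P_t = ρ_{t+1}(ρ_t − τ)/α_t − (ρ_{t+1} − ρ_t). Let t̄ ≥ 0 be such that P_t > 0 for all t ≥ t̄. Then, as T → ∞: 1/(Σ_{t=t̄}^T P_t) = Θ( (T+1)^{-(1+2a−b)} ) and (Σ_{t=t̄}^T ρ_t² P_t)/(Σ_{t=t̄}^T P_t)² = Θ( (T+1)^{-(1−b)} ). (Lemma 2(c).) -/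

import Mathlib

open scoped BigOperators

set_option maxHeartbeats 1000000

/-- For `0 < s ≤ 1`: `s*(t+1)^(s-1) ≤ (t+1)^s - t^s`. -/
lemma my_step_lb {s : ℝ} (hs0 : 0 < s) (hs1 : s ≤ 1) (t : ℕ) :
    s * ((t : ℝ) + 1) ^ (s - 1) ≤ ((t : ℝ) + 1) ^ s - (t : ℝ) ^ s := by
  set y : ℝ := (t : ℝ) + 1 with hy
  have hy1 : (1 : ℝ) ≤ y := by rw [hy]; linarith [Nat.cast_nonneg (α := ℝ) t]
  have hy0 : (0 : ℝ) < y := by positivity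
  have hx : (-1 : ℝ) ≤ -(1 / y) := by
    rw [neg_le_neg_iff]
    exact div_le_one_of_le₀ hy1 hy0.le
  have hb := rpow_one_add_le_one_add_mul_self hx hs0.le hs1
  -- (1 - 1/y)^s ≤ 1 - s/y
  have ht : (t : ℝ) = y * (1 + -(1 / y)) := by
    field_simp [hy]; linarith
  have h1 : (t : ℝ) ^ s = y ^ s * (1 + -(1 / y)) ^ s := by
    rw [ht, Real.mul_rpow hy0.le (by have := div_le_one_of_le₀ hy1 hy0.le; linarith)]
  have h2 : (t : ℝ) ^ s ≤ y ^ s * (1 + s * -(1 / y)) := by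
    rw [h1]
    exact mul_le_mul_of_nonneg_left hb (Real.rpow_nonneg hy0.le s)
  have h3 : y ^ s * (1 + s * -(1 / y)) = y ^ s - s * y ^ (s - 1) := by
    have : y ^ (s - 1) = y ^ s / y := by
      rw [Real.rpow_sub hy0, Real.rpow_one]
    rw [this]; field_simp; ring
  linarith [h2, h3.symm ▸ h2]

/-- For `0 < s ≤ 1`: `(t+2)^s - (t+1)^s ≤ s*(t+1)^(s-1)`. -/
lemma my_step_ub2 {s : ℝ} (hs0 : 0 < s) (hs1 : s ≤ 1) (t : ℕ) :
    ((t : ℝ) + 2) ^ s - ((t : ℝ) + 1) ^ s ≤ s * ((t : ℝ) + 1) ^ (s - 1) := by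
  set y : ℝ := (t : ℝ) + 1 with hy
  have hy0 : (0 : ℝ) < y := by positivity
  have hx : (-1 : ℝ) ≤ (1 / y) := by
    have h0 : (0:ℝ) ≤ 1/y := by positivity
    linarith
  have hb := rpow_one_add_le_one_add_mul_self hx hs0.le hs1
  have ht : (t : ℝ) + 2 = y * (1 + 1 / y) := by field_simp [hy]; ring
  have h1 : ((t : ℝ) + 2) ^ s = y ^ s * (1 + 1 / y) ^ s := by
    rw [ht, Real.mul_rpow hy0.le (by positivity)]
  have h2 : ((t : ℝ) + 2) ^ s ≤ y ^ s * (1 + s * (1 / y)) := by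
    rw [h1]
    exact mul_le_mul_of_nonneg_left hb (Real.rpow_nonneg hy0.le s)
  have h3 : y ^ s * (1 + s * (1 / y)) = y ^ s + s * y ^ (s - 1) := by
    have : y ^ (s - 1) = y ^ s / y := by
      rw [Real.rpow_sub hy0, Real.rpow_one]
    rw [this]; field_simp
  linarith [h3 ▸ h2]

/-- For `1 ≤ s`: `(t+1)^s - t^s ≤ s*(t+1)^(s-1)`. -/
lemma my_step_ub {s : ℝ} (hs : 1 ≤ s) (t : ℕ) :
    ((t : ℝ) + 1) ^ s - (t : ℝ) ^ s ≤ s * ((t : ℝ) + 1) ^ (s - 1) := by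
  set y : ℝ := (t : ℝ) + 1 with hy
  have hy1 : (1 : ℝ) ≤ y := by rw [hy]; linarith [Nat.cast_nonneg (α := ℝ) t]
  have hy0 : (0 : ℝ) < y := by positivity
  have hx : (-1 : ℝ) ≤ -(1 / y) := by
    rw [neg_le_neg_iff]
    exact div_le_one_of_le₀ hy1 hy0.le
  have hb := one_add_mul_self_le_rpow_one_add hx hs
  have ht : (t : ℝ) = y * (1 + -(1 / y)) := by field_simp [hy]; linarith
  have h1 : (t : ℝ) ^ s = y ^ s * (1 + -(1 / y)) ^ s := by
    rw [ht, Real.mul_rpow hy0.le (by have := div_le_one_of_le₀ hy1 hy0.le; linarith)]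
  have h2 : y ^ s * (1 + s * -(1 / y)) ≤ (t : ℝ) ^ s := by
    rw [h1]
    exact mul_le_mul_of_nonneg_left hb (Real.rpow_nonneg hy0.le s)
  have h3 : y ^ s * (1 + s * -(1 / y)) = y ^ s - s * y ^ (s - 1) := by
    have : y ^ (s - 1) = y ^ s / y := by
      rw [Real.rpow_sub hy0, Real.rpow_one]
    rw [this]; field_simp; ring
  linarith [h3 ▸ h2]

/-- Telescoping sum over `Icc m T`. -/
lemma my_telescope (f : ℕ → ℝ) (m T : ℕ) (h : m ≤ T + 1) :
    ∑ t ∈ Finset.Icc m T, (f (t + 1) - f t) = f (T + 1) - f m := by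
  rw [← Finset.Ico_add_one_right_eq_Icc, Finset.sum_Ico_eq_sub _ h,
      Finset.sum_range_sub f, Finset.sum_range_sub f]
  ring

/-- Upper bound for power sums. -/
lemma my_sum_ub {γ : ℝ} (hγ : -1 < γ) :
    ∃ D : ℝ, 0 < D ∧ ∀ T : ℕ,
      ∑ t ∈ Finset.Icc 0 T, ((t : ℝ) + 1) ^ γ ≤ D * ((T : ℝ) + 1) ^ (γ + 1) := by
  set s : ℝ := γ + 1 with hsdef
  have hs0 : 0 < s := by linarith
  have hsγ : s - 1 = γ := by rw [hsdef]; ring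
  rcases le_or_gt γ 0 with hγ0 | hγ0
  · refine ⟨1 / s, by positivity, fun T => ?_⟩
    have hs1 : s ≤ 1 := by linarith
    have key : ∀ t : ℕ, ((t : ℝ) + 1) ^ γ
        ≤ ((((t + 1 : ℕ) : ℝ)) ^ s - ((t : ℕ) : ℝ) ^ s) / s := by
      intro t
      rw [le_div_iff₀ hs0, mul_comm]
      have := my_step_lb hs0 hs1 t
      rw [hsγ] at this
      push_cast
      linarith
    calc ∑ t ∈ Finset.Icc 0 T, ((t : ℝ) + 1) ^ γ
        ≤ ∑ t ∈ Finset.Icc 0 T, ((((t + 1 : ℕ) : ℝ)) ^ s - ((t : ℕ) : ℝ) ^ s) / s :=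
          Finset.sum_le_sum fun t _ => key t
      _ = (∑ t ∈ Finset.Icc 0 T, ((((t + 1 : ℕ) : ℝ)) ^ s - ((t : ℕ) : ℝ) ^ s)) / s := by
          rw [Finset.sum_div]
      _ = (((T + 1 : ℕ) : ℝ) ^ s - ((0 : ℕ) : ℝ) ^ s) / s := by
          rw [my_telescope (fun t => ((t : ℕ) : ℝ) ^ s) 0 T (by omega)]
      _ = (1 / s) * ((T : ℝ) + 1) ^ (γ + 1) := by
          push_cast
          rw [Real.zero_rpow hs0.ne']
          rw [← hsdef]
          ring
  · refine ⟨1, one_pos, fun T => ?_⟩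
    have hTpos : (0 : ℝ) < (T : ℝ) + 1 := by positivity
    calc ∑ t ∈ Finset.Icc 0 T, ((t : ℝ) + 1) ^ γ
        ≤ ∑ t ∈ Finset.Icc 0 T, ((T : ℝ) + 1) ^ γ := by
          refine Finset.sum_le_sum fun t ht => ?_
          have ht' : (t : ℝ) ≤ (T : ℝ) := Nat.cast_le.mpr (Finset.mem_Icc.mp ht).2
          exact Real.rpow_le_rpow (by positivity) (by linarith) hγ0.le
      _ = ((T : ℝ) + 1) * ((T : ℝ) + 1) ^ γ := by
          rw [Finset.sum_const, Nat.card_Icc]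
          simp [nsmul_eq_mul]
      _ = 1 * ((T : ℝ) + 1) ^ (γ + 1) := by
          rw [Real.rpow_add hTpos, Real.rpow_one]; ring

/-- Lower bound for power sums starting at `m`. -/
lemma my_sum_lb {γ : ℝ} (hγ : -1 < γ) (m : ℕ) :
    ∃ T0 : ℕ, ∀ T : ℕ, m ≤ T → T0 ≤ T →
      (1 / (2 * (γ + 1))) * ((T : ℝ) + 1) ^ (γ + 1) ≤
        ∑ t ∈ Finset.Icc m T, ((t : ℝ) + 1) ^ γ := by
  set s : ℝ := γ + 1 with hsdef
  have hs0 : 0 < s := by linarith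
  have hsγ : s - 1 = γ := by rw [hsdef]; ring
  have main : ∀ T : ℕ, m ≤ T →
      (((T : ℝ) + 1) ^ s - ((m : ℝ) + 1) ^ s) / s ≤
        ∑ t ∈ Finset.Icc m T, ((t : ℝ) + 1) ^ γ := by
    intro T hmT
    rcases le_or_gt s 1 with hs1 | hs1
    · -- f t = (t+1)^s
      have key : ∀ t : ℕ, ((((t + 1 : ℕ) : ℝ) + 1) ^ s - (((t : ℕ) : ℝ) + 1) ^ s) / s
          ≤ ((t : ℝ) + 1) ^ γ := by
        intro t
        rw [div_le_iff₀ hs0, mul_comm]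
        have := my_step_ub2 hs0 hs1 t
        rw [hsγ] at this
        push_cast
        rw [show ((t:ℝ) + 1 + 1) = (t:ℝ) + 2 by ring]
        linarith
      calc (((T : ℝ) + 1) ^ s - ((m : ℝ) + 1) ^ s) / s
          ≤ ((((T + 1 : ℕ) : ℝ) + 1) ^ s - (((m : ℕ) : ℝ) + 1) ^ s) / s := by
            have : ((T : ℝ) + 1) ^ s ≤ (((T + 1 : ℕ) : ℝ) + 1) ^ s :=
              Real.rpow_le_rpow (by positivity) (by push_cast; linarith) hs0.le
            apply div_le_div_of_nonneg_right ?_ hs0.le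
            · linarith
        _ = (∑ t ∈ Finset.Icc m T,
              ((((t + 1 : ℕ) : ℝ) + 1) ^ s - (((t : ℕ) : ℝ) + 1) ^ s)) / s := by
            rw [my_telescope (fun t => (((t : ℕ) : ℝ) + 1) ^ s) m T (by omega)]
        _ = ∑ t ∈ Finset.Icc m T,
              ((((t + 1 : ℕ) : ℝ) + 1) ^ s - (((t : ℕ) : ℝ) + 1) ^ s) / s := by
            rw [Finset.sum_div]
        _ ≤ ∑ t ∈ Finset.Icc m T, ((t : ℝ) + 1) ^ γ :=
            Finset.sum_le_sum fun t _ => key t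
    · -- f t = t^s
      have key : ∀ t : ℕ, ((((t + 1 : ℕ) : ℝ)) ^ s - ((t : ℕ) : ℝ) ^ s) / s
          ≤ ((t : ℝ) + 1) ^ γ := by
        intro t
        rw [div_le_iff₀ hs0, mul_comm]
        have := my_step_ub hs1.le t
        rw [hsγ] at this
        push_cast
        linarith
      calc (((T : ℝ) + 1) ^ s - ((m : ℝ) + 1) ^ s) / s
          ≤ ((((T + 1 : ℕ) : ℝ)) ^ s - ((m : ℕ) : ℝ) ^ s) / s := by
            have h1 : ((m : ℝ)) ^ s ≤ ((m : ℝ) + 1) ^ s :=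
              Real.rpow_le_rpow (by positivity) (by linarith) hs0.le
            apply div_le_div_of_nonneg_right ?_ hs0.le
            · push_cast; linarith
        _ = (∑ t ∈ Finset.Icc m T,
              ((((t + 1 : ℕ) : ℝ)) ^ s - ((t : ℕ) : ℝ) ^ s)) / s := by
            rw [my_telescope (fun t => ((t : ℕ) : ℝ) ^ s) m T (by omega)]
        _ = ∑ t ∈ Finset.Icc m T,
              ((((t + 1 : ℕ) : ℝ)) ^ s - ((t : ℕ) : ℝ) ^ s) / s := by
            rw [Finset.sum_div]
        _ ≤ ∑ t ∈ Finset.Icc m T, ((t : ℝ) + 1) ^ γ :=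
            Finset.sum_le_sum fun t _ => key t
  -- choose T0
  refine ⟨max m ⌈(2 : ℝ) ^ (1 / s) * ((m : ℝ) + 1)⌉₊, fun T hmT hT0 => ?_⟩
  have hT2 : (2 : ℝ) ^ (1 / s) * ((m : ℝ) + 1) ≤ (T : ℝ) + 1 := by
    have h1 : (⌈(2 : ℝ) ^ (1 / s) * ((m : ℝ) + 1)⌉₊ : ℝ) ≤ (T : ℝ) := by
      exact_mod_cast le_trans (le_max_right _ _) hT0
    linarith [Nat.le_ceil ((2 : ℝ) ^ (1 / s) * ((m : ℝ) + 1))]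
  have hmul : (2 : ℝ) * ((m : ℝ) + 1) ^ s ≤ ((T : ℝ) + 1) ^ s := by
    have h2 : ((2 : ℝ) ^ (1 / s) * ((m : ℝ) + 1)) ^ s ≤ ((T : ℝ) + 1) ^ s :=
      Real.rpow_le_rpow (by positivity) hT2 hs0.le
    have h3 : ((2 : ℝ) ^ (1 / s) * ((m : ℝ) + 1)) ^ s
        = (2 : ℝ) * ((m : ℝ) + 1) ^ s := by
      rw [Real.mul_rpow (by positivity) (by positivity)]
      rw [← Real.rpow_mul (by norm_num : (0:ℝ) ≤ 2)]
      rw [one_div_mul_cancel hs0.ne', Real.rpow_one]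
    linarith
  have hmain := main T hmT
  have hfin : (1 / (2 * s)) * ((T : ℝ) + 1) ^ s
      ≤ (((T : ℝ) + 1) ^ s - ((m : ℝ) + 1) ^ s) / s := by
    rw [show (1 / (2 * s)) * ((T : ℝ) + 1) ^ s = ((T : ℝ) + 1) ^ s / (2 * s) by ring]
    rw [div_le_div_iff₀ (by positivity) hs0]
    nlinarith [hmul, hs0]
  calc (1 / (2 * (γ + 1))) * ((T : ℝ) + 1) ^ (γ + 1)
      = (1 / (2 * s)) * ((T : ℝ) + 1) ^ s := by rw [hsdef]
    _ ≤ (((T : ℝ) + 1) ^ s - ((m : ℝ) + 1) ^ s) / s := hfin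
    _ ≤ ∑ t ∈ Finset.Icc m T, ((t : ℝ) + 1) ^ γ := hmain

/-- Upper bound on `P`. -/
lemma my_P_ub (τ ρ0 α0 a b : ℝ) (hτ : 0 < τ) (hρ0 : τ < ρ0) (hα0 : ρ0 + τ ≤ α0)
    (ha : 0 < a) (hab : a ≤ b) (hb1 : b ≤ 1)
    (ρ α P : ℕ → ℝ)
    (hρdef : ∀ t, ρ t = ρ0 * ((t : ℝ) + 1) ^ a)
    (hαdef : ∀ t, α t = α0 * ((t : ℝ) + 1) ^ b)
    (hPdef : ∀ t, P t = ρ (t + 1) * (ρ t - τ) / α t - (ρ (t + 1) - ρ t)) (t : ℕ) :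
    P t ≤ (2 * ρ0 ^ 2 / α0) * ((t : ℝ) + 1) ^ (2 * a - b) := by
  have hρ0pos : 0 < ρ0 := hτ.trans hρ0
  have hα0pos : 0 < α0 := by linarith
  set y : ℝ := (t : ℝ) + 1 with hy
  have hy0 : (0 : ℝ) < y := by positivity
  have hy1 : (1 : ℝ) ≤ y := by rw [hy]; linarith [Nat.cast_nonneg (α := ℝ) t]
  set A : ℝ := (y + 1) ^ a with hA
  set B : ℝ := y ^ a with hB
  set C : ℝ := y ^ b with hC
  have hA0 : 0 < A := Real.rpow_pos_of_pos (by linarith) a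
  have hB0 : 0 < B := Real.rpow_pos_of_pos hy0 a
  have hC0 : 0 < C := Real.rpow_pos_of_pos hy0 b
  have hBA : B ≤ A := Real.rpow_le_rpow hy0.le (by linarith) ha.le
  have hA2B : A ≤ 2 * B := by
    have h1 : (y + 1) ^ a ≤ (2 * y) ^ a :=
      Real.rpow_le_rpow (by linarith) (by linarith) ha.le
    have h2 : (2 * y) ^ a = (2 : ℝ) ^ a * y ^ a :=
      Real.mul_rpow (by norm_num) hy0.le
    have h3 : (2 : ℝ) ^ a ≤ (2 : ℝ) ^ (1 : ℝ) :=
      Real.rpow_le_rpow_of_exponent_le (by norm_num) (by linarith)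
    rw [Real.rpow_one] at h3
    calc A ≤ (2 : ℝ) ^ a * y ^ a := by rw [← h2]; exact h1
      _ ≤ 2 * B := by rw [hB]; nlinarith [hB0]
  have hρt : ρ t = ρ0 * B := hρdef t
  have hρt1 : ρ (t + 1) = ρ0 * A := by
    rw [hρdef (t + 1), hA, hy]; push_cast; ring_nf
  have hαt : α t = α0 * C := hαdef t
  have hP : P t = ρ0 * A * (ρ0 * B - τ) / (α0 * C) - (ρ0 * A - ρ0 * B) := by
    rw [hPdef t, hρt, hρt1, hαt]
  have hnum : ρ0 * A * (ρ0 * B - τ) ≤ 2 * ρ0 ^ 2 * (B * B) := by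
    have e1 : ρ0 * A * (ρ0 * B - τ) ≤ ρ0 * A * (ρ0 * B) :=
      mul_le_mul_of_nonneg_left (by linarith) (mul_nonneg hρ0pos.le hA0.le)
    have e2 : ρ0 * A * (ρ0 * B) ≤ ρ0 * (2 * B) * (ρ0 * B) := by
      have h := mul_le_mul_of_nonneg_right
        (mul_le_mul_of_nonneg_left hA2B hρ0pos.le)
        (mul_nonneg hρ0pos.le hB0.le)
      linarith
    have e3 : ρ0 * (2 * B) * (ρ0 * B) = 2 * ρ0 ^ 2 * (B * B) := by ring
    linarith
  have hdiv : ρ0 * A * (ρ0 * B - τ) / (α0 * C) ≤ 2 * ρ0 ^ 2 * (B * B) / (α0 * C) :=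
    div_le_div_of_nonneg_right hnum (mul_pos hα0pos hC0).le
  have hdrop : 0 ≤ ρ0 * A - ρ0 * B := by nlinarith [hBA]
  have hfinal : 2 * ρ0 ^ 2 * (B * B) / (α0 * C) = (2 * ρ0 ^ 2 / α0) * y ^ (2 * a - b) := by
    have hBB : B * B = y ^ (2 * a) := by
      rw [hB, ← Real.rpow_add hy0]; ring_nf
    have hsub : y ^ (2 * a - b) = y ^ (2 * a) / y ^ b := Real.rpow_sub hy0 _ _
    rw [hBB, hsub, hC]
    field_simp
  rw [hP, ← hfinal]
  linarith [hdiv]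

/-- Lower bound on `P` for large `t`. -/
lemma my_P_lb (τ ρ0 α0 a b : ℝ) (hτ : 0 < τ) (hρ0 : τ < ρ0) (hα0 : ρ0 + τ ≤ α0)
    (ha : 0 < a) (hab : a ≤ b) (hb1 : b ≤ 1)
    (ρ α P : ℕ → ℝ)
    (hρdef : ∀ t, ρ t = ρ0 * ((t : ℝ) + 1) ^ a)
    (hαdef : ∀ t, α t = α0 * ((t : ℝ) + 1) ^ b)
    (hPdef : ∀ t, P t = ρ (t + 1) * (ρ t - τ) / α t - (ρ (t + 1) - ρ t)) :
    ∃ T1 : ℕ, ∀ t : ℕ, T1 ≤ t →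
      (ρ0 * (ρ0 - τ) / α0 / 2) * ((t : ℝ) + 1) ^ (2 * a - b) ≤ P t := by
  have hρ0pos : 0 < ρ0 := hτ.trans hρ0
  have hα0pos : 0 < α0 := by linarith
  set clb : ℝ := ρ0 * (ρ0 - τ) / α0 with hclb
  have hclb0 : 0 < clb := by
    apply div_pos (mul_pos hρ0pos (by linarith)) hα0pos
  set e : ℝ := 1 + a - b with he
  have he0 : 0 < e := by rw [he]; linarith
  set K : ℝ := 2 * ρ0 / clb with hK
  have hK0 : 0 < K := by positivity
  refine ⟨⌈K ^ (1 / e)⌉₊, fun t ht => ?_⟩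
  set y : ℝ := (t : ℝ) + 1 with hy
  have hy0 : (0 : ℝ) < y := by positivity
  have hy1 : (1 : ℝ) ≤ y := by rw [hy]; linarith [Nat.cast_nonneg (α := ℝ) t]
  have hyK : K ^ (1 / e) ≤ y := by
    have h1 : (⌈K ^ (1 / e)⌉₊ : ℝ) ≤ (t : ℝ) := by exact_mod_cast ht
    have h2 := Nat.le_ceil (K ^ (1 / e))
    rw [hy]; linarith
  have hye : K ≤ y ^ e := by
    have h1 : (K ^ (1 / e)) ^ e ≤ y ^ e :=
      Real.rpow_le_rpow (Real.rpow_nonneg hK0.le _) hyK he0.le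
    have h2 : (K ^ (1 / e)) ^ e = K := by
      rw [← Real.rpow_mul hK0.le, one_div_mul_cancel he0.ne', Real.rpow_one]
    linarith
  -- basic quantities
  set A : ℝ := (y + 1) ^ a with hA
  set B : ℝ := y ^ a with hB
  set C : ℝ := y ^ b with hC
  have hA0 : 0 < A := Real.rpow_pos_of_pos (by linarith) a
  have hB0 : 0 < B := Real.rpow_pos_of_pos hy0 a
  have hC0 : 0 < C := Real.rpow_pos_of_pos hy0 b
  have hBA : B ≤ A := Real.rpow_le_rpow hy0.le (by linarith) ha.le
  have hB1 : (1 : ℝ) ≤ B := by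
    rw [hB]
    calc (1 : ℝ) = (1 : ℝ) ^ a := (Real.one_rpow a).symm
      _ ≤ y ^ a := Real.rpow_le_rpow (by norm_num) hy1 ha.le
  have hρt : ρ t = ρ0 * B := hρdef t
  have hρt1 : ρ (t + 1) = ρ0 * A := by
    rw [hρdef (t + 1), hA, hy]; push_cast; ring_nf
  have hαt : α t = α0 * C := hαdef t
  have hP : P t = ρ0 * A * (ρ0 * B - τ) / (α0 * C) - (ρ0 * A - ρ0 * B) := by
    rw [hPdef t, hρt, hρt1, hαt]
  -- increment bound : A - B ≤ y^(a-1)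
  have hya1 : (0 : ℝ) ≤ y ^ (a - 1) := Real.rpow_nonneg hy0.le _
  have hinc : A - B ≤ y ^ (a - 1) := by
    have h1 := my_step_ub2 ha (hab.trans hb1) t
    have hAe : A = ((t : ℝ) + 2) ^ a := by
      rw [hA, hy, show ((t : ℝ) + 1 + 1) = (t : ℝ) + 2 by ring]
    have hBe : B = ((t : ℝ) + 1) ^ a := by rw [hB, hy]
    have hye : y ^ (a - 1) = ((t : ℝ) + 1) ^ (a - 1) := by rw [hy]
    rw [hAe, hBe, hye]
    nlinarith [Real.rpow_nonneg (by positivity : (0:ℝ) ≤ (t : ℝ) + 1) (a - 1)]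
  -- main lower bound on first term
  have hnum : ρ0 * (ρ0 - τ) * (B * B) ≤ ρ0 * A * (ρ0 * B - τ) := by
    have h1 : (ρ0 - τ) * B ≤ ρ0 * B - τ := by nlinarith [hB1]
    have h2 : 0 ≤ (ρ0 - τ) * B := by nlinarith [hB0]
    have h3 : 0 ≤ ρ0 * B - τ := le_trans h2 h1
    nlinarith [mul_le_mul_of_nonneg_left h1 (mul_nonneg hρ0pos.le hB0.le),
      mul_le_mul_of_nonneg_right hBA (mul_nonneg hρ0pos.le h3)]
  have hdiv : ρ0 * (ρ0 - τ) * (B * B) / (α0 * C) ≤ ρ0 * A * (ρ0 * B - τ) / (α0 * C) :=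
    div_le_div_of_nonneg_right hnum (mul_pos hα0pos hC0).le
  have hfirst : ρ0 * (ρ0 - τ) * (B * B) / (α0 * C) = clb * y ^ (2 * a - b) := by
    have hBB : B * B = y ^ (2 * a) := by
      rw [hB, ← Real.rpow_add hy0]; ring_nf
    have hsub : y ^ (2 * a - b) = y ^ (2 * a) / y ^ b := Real.rpow_sub hy0 _ _
    rw [hBB, hsub, hC, hclb]
    field_simp
  -- tail comparison
  have htail : ρ0 * y ^ (a - 1) ≤ clb / 2 * y ^ (2 * a - b) := by
    have hsplit : y ^ (2 * a - b) = y ^ (a - 1) * y ^ e := by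
      rw [← Real.rpow_add hy0, he]; ring_nf
    rw [hsplit]
    have h1 : clb / 2 * (y ^ (a - 1) * y ^ e) = (clb / 2 * y ^ e) * y ^ (a - 1) := by ring
    rw [h1]
    have h2 : ρ0 ≤ clb / 2 * y ^ e := by
      have : clb / 2 * K = ρ0 := by
        rw [hK]; field_simp
      nlinarith [hye, hclb0]
    nlinarith [hya1, h2]
  have hPge : clb * y ^ (2 * a - b) - ρ0 * y ^ (a - 1) ≤ P t := by
    rw [hP]
    have hAB : ρ0 * A - ρ0 * B ≤ ρ0 * y ^ (a - 1) := by nlinarith [hinc, hρ0pos]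
    rw [← hfirst]
    linarith [hdiv]
  calc clb / 2 * y ^ (2 * a - b)
      = clb * y ^ (2 * a - b) - clb / 2 * y ^ (2 * a - b) := by ring
    _ ≤ clb * y ^ (2 * a - b) - ρ0 * y ^ (a - 1) := by linarith [htail]
    _ ≤ P t := hPge

/-- **Lemma 2(c).** Let `τ > 0`, `0 < a ≤ b ≤ 1`, `ρ_t = ρ₀(t+1)^a`, `α_t = α₀(t+1)^b` with
`ρ₀ > τ`, `α₀ ≥ ρ₀ + τ`, `P_t = ρ_{t+1}(ρ_t − τ)/α_t − (ρ_{t+1} − ρ_t)`, and `t̄ ≥ 0` such that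
`P_t > 0` for all `t ≥ t̄`. Then, as `T → ∞`,
`1/(Σ_{t=t̄}^T P_t) = Θ((T+1)^{-(1+2a−b)})` and
`(Σ_{t=t̄}^T ρ_t² P_t)/(Σ_{t=t̄}^T P_t)² = Θ((T+1)^{-(1−b)})`. -/
theorem power_parameter_sum_rates
    (τ ρ0 α0 a b : ℝ) (hτ : 0 < τ) (hρ0 : τ < ρ0) (hα0 : ρ0 + τ ≤ α0)
    (ha : 0 < a) (hab : a ≤ b) (hb1 : b ≤ 1)
    (ρ α P : ℕ → ℝ)
    (hρdef : ∀ t, ρ t = ρ0 * ((t : ℝ) + 1) ^ a)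
    (hαdef : ∀ t, α t = α0 * ((t : ℝ) + 1) ^ b)
    (hPdef : ∀ t, P t = ρ (t + 1) * (ρ t - τ) / α t - (ρ (t + 1) - ρ t))
    (tbar : ℕ) (htbar : ∀ t ≥ tbar, 0 < P t) :
    (∃ c1 c2 : ℝ, 0 < c1 ∧ c1 ≤ c2 ∧ ∃ T0 : ℕ, ∀ T : ℕ, tbar ≤ T → T0 ≤ T →
       c1 * ((T : ℝ) + 1) ^ (-(1 + 2 * a - b)) ≤ 1 / ∑ t ∈ Finset.Icc tbar T, P t ∧
       1 / ∑ t ∈ Finset.Icc tbar T, P t ≤ c2 * ((T : ℝ) + 1) ^ (-(1 + 2 * a - b))) ∧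
    (∃ c1 c2 : ℝ, 0 < c1 ∧ c1 ≤ c2 ∧ ∃ T0 : ℕ, ∀ T : ℕ, tbar ≤ T → T0 ≤ T →
       c1 * ((T : ℝ) + 1) ^ (-(1 - b)) ≤
         (∑ t ∈ Finset.Icc tbar T, ρ t ^ 2 * P t) / (∑ t ∈ Finset.Icc tbar T, P t) ^ 2 ∧
       (∑ t ∈ Finset.Icc tbar T, ρ t ^ 2 * P t) / (∑ t ∈ Finset.Icc tbar T, P t) ^ 2 ≤
         c2 * ((T : ℝ) + 1) ^ (-(1 - b))) := by
  have hρ0pos : 0 < ρ0 := hτ.trans hρ0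
  have hα0pos : 0 < α0 := by linarith
  set γ1 : ℝ := 2 * a - b with hγ1def
  set γ2 : ℝ := 2 * a + (2 * a - b) with hγ2def
  have hγ1 : -1 < γ1 := by rw [hγ1def]; linarith
  have hγ2 : -1 < γ2 := by rw [hγ2def]; linarith
  set Cub : ℝ := 2 * ρ0 ^ 2 / α0 with hCub
  have hCub0 : 0 < Cub := by positivity
  set clb2 : ℝ := ρ0 * (ρ0 - τ) / α0 / 2 with hclb2
  have hclb20 : 0 < clb2 := by
    have : 0 < ρ0 - τ := by linarith
    positivity
  have hPub : ∀ t : ℕ, P t ≤ Cub * ((t : ℝ) + 1) ^ γ1 := fun t =>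
    my_P_ub τ ρ0 α0 a b hτ hρ0 hα0 ha hab hb1 ρ α P hρdef hαdef hPdef t
  obtain ⟨T1, hT1⟩ := my_P_lb τ ρ0 α0 a b hτ hρ0 hα0 ha hab hb1 ρ α P hρdef hαdef hPdef
  -- termwise bounds about ρ^2 * P
  have hρsq : ∀ t : ℕ, ρ t ^ 2 * ((t : ℝ) + 1) ^ γ1 = ρ0 ^ 2 * ((t : ℝ) + 1) ^ γ2 := by
    intro t
    have hy0 : (0 : ℝ) < (t : ℝ) + 1 := by positivity
    rw [hρdef t, mul_pow, ← Real.rpow_natCast (((t : ℝ) + 1) ^ a) 2,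
      ← Real.rpow_mul hy0.le]
    rw [mul_assoc, ← Real.rpow_add hy0]
    congr 1
    push_cast
    rw [hγ1def, hγ2def]
    ring
  have hρsq_nonneg : ∀ t : ℕ, (0 : ℝ) ≤ ρ t ^ 2 := fun t => sq_nonneg _
  have hQub : ∀ t : ℕ, ρ t ^ 2 * P t ≤ (ρ0 ^ 2 * Cub) * ((t : ℝ) + 1) ^ γ2 := by
    intro t
    calc ρ t ^ 2 * P t ≤ ρ t ^ 2 * (Cub * ((t : ℝ) + 1) ^ γ1) :=
          mul_le_mul_of_nonneg_left (hPub t) (hρsq_nonneg t)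
      _ = Cub * (ρ t ^ 2 * ((t : ℝ) + 1) ^ γ1) := by ring
      _ = (ρ0 ^ 2 * Cub) * ((t : ℝ) + 1) ^ γ2 := by rw [hρsq t]; ring
  have hQlb : ∀ t : ℕ, T1 ≤ t →
      (ρ0 ^ 2 * clb2) * ((t : ℝ) + 1) ^ γ2 ≤ ρ t ^ 2 * P t := by
    intro t ht
    calc (ρ0 ^ 2 * clb2) * ((t : ℝ) + 1) ^ γ2
        = clb2 * (ρ0 ^ 2 * ((t : ℝ) + 1) ^ γ2) := by ring
      _ = clb2 * (ρ t ^ 2 * ((t : ℝ) + 1) ^ γ1) := by rw [hρsq t]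
      _ = ρ t ^ 2 * (clb2 * ((t : ℝ) + 1) ^ γ1) := by ring
      _ ≤ ρ t ^ 2 * P t :=
          mul_le_mul_of_nonneg_left (hT1 t ht) (hρsq_nonneg t)
  -- sums
  obtain ⟨D1, hD1pos, hD1⟩ := my_sum_ub hγ1
  obtain ⟨D2, hD2pos, hD2⟩ := my_sum_ub hγ2
  set m : ℕ := max tbar T1 with hm
  obtain ⟨T0a, hT0a⟩ := my_sum_lb hγ1 m
  obtain ⟨T0b, hT0b⟩ := my_sum_lb hγ2 m
  set d1 : ℝ := clb2 * (1 / (2 * (γ1 + 1))) with hd1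
  have hd1pos : 0 < d1 := by
    have : (0:ℝ) < γ1 + 1 := by linarith
    positivity
  set d2 : ℝ := Cub * D1 with hd2
  have hd2pos : 0 < d2 := by positivity
  set e1 : ℝ := (ρ0 ^ 2 * clb2) * (1 / (2 * (γ2 + 1))) with he1
  have he1pos : 0 < e1 := by
    have : (0:ℝ) < γ2 + 1 := by linarith
    positivity
  set e2 : ℝ := (ρ0 ^ 2 * Cub) * D2 with he2
  have he2pos : 0 < e2 := by positivity
  set T0 : ℕ := max (max T0a T0b) m with hT0def
  -- key sandwich bounds
  have key : ∀ T : ℕ, tbar ≤ T → T0 ≤ T →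
      (d1 * ((T : ℝ) + 1) ^ (γ1 + 1) ≤ ∑ t ∈ Finset.Icc tbar T, P t ∧
       ∑ t ∈ Finset.Icc tbar T, P t ≤ d2 * ((T : ℝ) + 1) ^ (γ1 + 1)) ∧
      (e1 * ((T : ℝ) + 1) ^ (γ2 + 1) ≤ ∑ t ∈ Finset.Icc tbar T, ρ t ^ 2 * P t ∧
       ∑ t ∈ Finset.Icc tbar T, ρ t ^ 2 * P t ≤ e2 * ((T : ℝ) + 1) ^ (γ2 + 1)) := by
    intro T htT hTT
    have hmT : m ≤ T := le_trans (le_max_right _ _) hTT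
    have hT0aT : T0a ≤ T := le_trans (le_trans (le_max_left _ _) (le_max_left _ _)) hTT
    have hT0bT : T0b ≤ T := le_trans (le_trans (le_max_right _ _) (le_max_left _ _)) hTT
    have hsubset : Finset.Icc m T ⊆ Finset.Icc tbar T := by
      apply Finset.Icc_subset_Icc_left (le_max_left _ _)
    have hsubset0 : Finset.Icc tbar T ⊆ Finset.Icc 0 T :=
      Finset.Icc_subset_Icc_left (Nat.zero_le _)
    constructor
    · constructor
      · -- lower bound for S
        calc d1 * ((T : ℝ) + 1) ^ (γ1 + 1)
            = clb2 * ((1 / (2 * (γ1 + 1))) * ((T : ℝ) + 1) ^ (γ1 + 1)) := by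
              rw [hd1]; ring
          _ ≤ clb2 * ∑ t ∈ Finset.Icc m T, ((t : ℝ) + 1) ^ γ1 :=
              mul_le_mul_of_nonneg_left (hT0a T hmT hT0aT) hclb20.le
          _ = ∑ t ∈ Finset.Icc m T, clb2 * ((t : ℝ) + 1) ^ γ1 := by
              rw [Finset.mul_sum]
          _ ≤ ∑ t ∈ Finset.Icc m T, P t := by
              refine Finset.sum_le_sum fun t ht => ?_
              exact hT1 t (le_trans (le_max_right _ _) (Finset.mem_Icc.mp ht).1)
          _ ≤ ∑ t ∈ Finset.Icc tbar T, P t := by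
              refine Finset.sum_le_sum_of_subset_of_nonneg hsubset fun t ht _ => ?_
              exact (htbar t (Finset.mem_Icc.mp ht).1).le
      · -- upper bound for S
        calc ∑ t ∈ Finset.Icc tbar T, P t
            ≤ ∑ t ∈ Finset.Icc tbar T, Cub * ((t : ℝ) + 1) ^ γ1 :=
              Finset.sum_le_sum fun t _ => hPub t
          _ ≤ ∑ t ∈ Finset.Icc 0 T, Cub * ((t : ℝ) + 1) ^ γ1 := by
              refine Finset.sum_le_sum_of_subset_of_nonneg hsubset0 fun t ht _ => ?_
              positivity
          _ = Cub * ∑ t ∈ Finset.Icc 0 T, ((t : ℝ) + 1) ^ γ1 := by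
              rw [Finset.mul_sum]
          _ ≤ Cub * (D1 * ((T : ℝ) + 1) ^ (γ1 + 1)) :=
              mul_le_mul_of_nonneg_left (hD1 T) hCub0.le
          _ = d2 * ((T : ℝ) + 1) ^ (γ1 + 1) := by rw [hd2]; ring
    · constructor
      · calc e1 * ((T : ℝ) + 1) ^ (γ2 + 1)
            = (ρ0 ^ 2 * clb2) * ((1 / (2 * (γ2 + 1))) * ((T : ℝ) + 1) ^ (γ2 + 1)) := by
              rw [he1]; ring
          _ ≤ (ρ0 ^ 2 * clb2) * ∑ t ∈ Finset.Icc m T, ((t : ℝ) + 1) ^ γ2 :=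
              mul_le_mul_of_nonneg_left (hT0b T hmT hT0bT) (by positivity)
          _ = ∑ t ∈ Finset.Icc m T, (ρ0 ^ 2 * clb2) * ((t : ℝ) + 1) ^ γ2 := by
              rw [Finset.mul_sum]
          _ ≤ ∑ t ∈ Finset.Icc m T, ρ t ^ 2 * P t := by
              refine Finset.sum_le_sum fun t ht => ?_
              exact hQlb t (le_trans (le_max_right _ _) (Finset.mem_Icc.mp ht).1)
          _ ≤ ∑ t ∈ Finset.Icc tbar T, ρ t ^ 2 * P t := by
              refine Finset.sum_le_sum_of_subset_of_nonneg hsubset fun t ht _ => ?_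
              exact mul_nonneg (hρsq_nonneg t) (htbar t (Finset.mem_Icc.mp ht).1).le
      · calc ∑ t ∈ Finset.Icc tbar T, ρ t ^ 2 * P t
            ≤ ∑ t ∈ Finset.Icc tbar T, (ρ0 ^ 2 * Cub) * ((t : ℝ) + 1) ^ γ2 :=
              Finset.sum_le_sum fun t _ => hQub t
          _ ≤ ∑ t ∈ Finset.Icc 0 T, (ρ0 ^ 2 * Cub) * ((t : ℝ) + 1) ^ γ2 := by
              refine Finset.sum_le_sum_of_subset_of_nonneg hsubset0 fun t ht _ => ?_
              positivity
          _ = (ρ0 ^ 2 * Cub) * ∑ t ∈ Finset.Icc 0 T, ((t : ℝ) + 1) ^ γ2 := by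
              rw [Finset.mul_sum]
          _ ≤ (ρ0 ^ 2 * Cub) * (D2 * ((T : ℝ) + 1) ^ (γ2 + 1)) :=
              mul_le_mul_of_nonneg_left (hD2 T) (by positivity)
          _ = e2 * ((T : ℝ) + 1) ^ (γ2 + 1) := by rw [he2]; ring
  constructor
  · -- first goal
    refine ⟨min (1 / d2) (1 / d1), max (1 / d2) (1 / d1),
      lt_min (by positivity) (by positivity), min_le_max, T0, fun T htT hTT => ?_⟩
    obtain ⟨⟨hS1, hS2⟩, _⟩ := key T htT hTT
    have hTpos : (0 : ℝ) < (T : ℝ) + 1 := by positivity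
    set S := ∑ t ∈ Finset.Icc tbar T, P t with hSdef
    set X : ℝ := ((T : ℝ) + 1) ^ (γ1 + 1) with hXdef
    have hXpos : (0 : ℝ) < X := Real.rpow_pos_of_pos hTpos _
    have hSpos : (0 : ℝ) < S := lt_of_lt_of_le (by positivity) hS1
    have hneg : ((T : ℝ) + 1) ^ (-(1 + 2 * a - b)) = X⁻¹ := by
      rw [hXdef, show -(1 + 2 * a - b) = -(γ1 + 1) by rw [hγ1def]; ring,
        Real.rpow_neg hTpos.le]
    have hlow : 1 / (d2 * X) ≤ 1 / S := one_div_le_one_div_of_le hSpos hS2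
    have hhigh : 1 / S ≤ 1 / (d1 * X) := one_div_le_one_div_of_le (by positivity) hS1
    have hsplit2 : 1 / (d2 * X) = (1 / d2) * X⁻¹ := by
      rw [one_div, mul_inv, one_div]
    have hsplit1 : 1 / (d1 * X) = (1 / d1) * X⁻¹ := by
      rw [one_div, mul_inv, one_div]
    constructor
    · rw [hneg]
      calc min (1 / d2) (1 / d1) * X⁻¹ ≤ (1 / d2) * X⁻¹ :=
            mul_le_mul_of_nonneg_right (min_le_left _ _) (by positivity)
        _ = 1 / (d2 * X) := hsplit2.symm
        _ ≤ 1 / S := hlow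
    · rw [hneg]
      calc 1 / S ≤ 1 / (d1 * X) := hhigh
        _ = (1 / d1) * X⁻¹ := hsplit1
        _ ≤ max (1 / d2) (1 / d1) * X⁻¹ :=
            mul_le_mul_of_nonneg_right (le_max_right _ _) (by positivity)
  · -- second goal
    refine ⟨min (e1 / d2 ^ 2) (e2 / d1 ^ 2), max (e1 / d2 ^ 2) (e2 / d1 ^ 2),
      lt_min (by positivity) (by positivity), min_le_max, T0, fun T htT hTT => ?_⟩
    obtain ⟨⟨hS1, hS2⟩, hQ1, hQ2⟩ := key T htT hTT
    have hTpos : (0 : ℝ) < (T : ℝ) + 1 := by positivity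
    set S := ∑ t ∈ Finset.Icc tbar T, P t with hSdef
    set Q := ∑ t ∈ Finset.Icc tbar T, ρ t ^ 2 * P t with hQdef
    set X1 : ℝ := ((T : ℝ) + 1) ^ (γ1 + 1) with hX1def
    set X2 : ℝ := ((T : ℝ) + 1) ^ (γ2 + 1) with hX2def
    have hX1pos : (0 : ℝ) < X1 := Real.rpow_pos_of_pos hTpos _
    have hX2pos : (0 : ℝ) < X2 := Real.rpow_pos_of_pos hTpos _
    have hSpos : (0 : ℝ) < S := lt_of_lt_of_le (by positivity) hS1
    have hQpos : (0 : ℝ) < Q := lt_of_lt_of_le (by positivity) hQ1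
    have hX1sq : X1 ^ 2 = ((T : ℝ) + 1) ^ ((γ1 + 1) + (γ1 + 1)) := by
      rw [hX1def, sq, ← Real.rpow_add hTpos]
    have hratio : X2 / X1 ^ 2 = ((T : ℝ) + 1) ^ (-(1 - b)) := by
      rw [hX1sq, hX2def, ← Real.rpow_sub hTpos]
      congr 1
      rw [hγ1def, hγ2def]
      ring
    have hS1sq : (d1 * X1) ^ 2 ≤ S ^ 2 := by
      apply pow_le_pow_left₀ (by positivity) hS1
    have hS2sq : S ^ 2 ≤ (d2 * X1) ^ 2 := by
      apply pow_le_pow_left₀ hSpos.le hS2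
    have hup : Q / S ^ 2 ≤ (e2 * X2) / ((d1 * X1) ^ 2) :=
      div_le_div₀ (by positivity) hQ2 (by positivity) hS1sq
    have hdown : (e1 * X2) / ((d2 * X1) ^ 2) ≤ Q / S ^ 2 :=
      div_le_div₀ hQpos.le hQ1 (by positivity) hS2sq
    have hupid : (e2 * X2) / ((d1 * X1) ^ 2) = (e2 / d1 ^ 2) * (X2 / X1 ^ 2) := by
      rw [mul_pow, div_mul_div_comm]
    have hdownid : (e1 * X2) / ((d2 * X1) ^ 2) = (e1 / d2 ^ 2) * (X2 / X1 ^ 2) := by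
      rw [mul_pow, div_mul_div_comm]
    constructor
    · calc min (e1 / d2 ^ 2) (e2 / d1 ^ 2) * ((T : ℝ) + 1) ^ (-(1 - b))
          ≤ (e1 / d2 ^ 2) * ((T : ℝ) + 1) ^ (-(1 - b)) :=
            mul_le_mul_of_nonneg_right (min_le_left _ _)
              (Real.rpow_nonneg hTpos.le _)
        _ = (e1 / d2 ^ 2) * (X2 / X1 ^ 2) := by rw [hratio]
        _ = (e1 * X2) / ((d2 * X1) ^ 2) := hdownid.symm
        _ ≤ Q / S ^ 2 := hdown
    · calc Q / S ^ 2 ≤ (e2 * X2) / ((d1 * X1) ^ 2) := hup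
        _ = (e2 / d1 ^ 2) * (X2 / X1 ^ 2) := hupid
        _ = (e2 / d1 ^ 2) * ((T : ℝ) + 1) ^ (-(1 - b)) := by rw [hratio]
        _ ≤ max (e1 / d2 ^ 2) (e2 / d1 ^ 2) * ((T : ℝ) + 1) ^ (-(1 - b)) :=
            mul_le_mul_of_nonneg_right (le_max_right _ _)
              (Real.rpow_nonneg hTpos.le _)
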